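/- For every nonnegative integer n and every real number x, Σ_{k=0}^{n} binom(2n-k, n-k) · (-2)^k · binom(x, k) = 4^n · binom(n - (x+1)/2, n), where binom(y, k) = y(y-1)···(y-k+1)/k! denotes the generalized binomial coefficient. -/

import Mathlib

/-- The generalized binomial coefficient `x(x-1)⋯(x-k+1)/k!` for real `x`. -/
noncomputable def rchoose (x : ℝ) (k : ℕ) : ℝ :=
  (∏ i ∈ Finset.range k, (x - i)) / (k.factorial : ℝ)

lemma rchoose_succ (x : ℝ) (k : ℕ) :
    rchoose x (k + 1) = rchoose x k * (x - k) / (k + 1) := by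
  unfold rchoose
  rw [Finset.prod_range_succ, Nat.factorial_succ, div_mul_eq_mul_div, div_div]
  push_cast
  rw [mul_comm ((k:ℝ)+1)]

lemma rchoose_reflect (y : ℝ) (n : ℕ) :
    rchoose ((n : ℝ) - 1 - y) n = (-1) ^ n * rchoose y n := by
  unfold rchoose
  rw [mul_comm, div_mul_eq_mul_div]
  congr 1
  rw [mul_comm]
  calc ∏ i ∈ Finset.range n, ((n : ℝ) - 1 - y - i)
      = ∏ i ∈ Finset.range n, (-1 * (y - ((n - 1 - i : ℕ) : ℝ))) := by
        refine Finset.prod_congr rfl fun i hi => ?_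
        have h : i < n := Finset.mem_range.mp hi
        have h2 : n - 1 - i = n - (i + 1) := by omega
        rw [h2, Nat.cast_sub (by omega)]
        push_cast
        ring
    _ = (-1) ^ n * ∏ i ∈ Finset.range n, (y - ((n - 1 - i : ℕ) : ℝ)) := by
        rw [Finset.prod_mul_distrib, Finset.prod_const, Finset.card_range]
    _ = (-1) ^ n * ∏ i ∈ Finset.range n, (y - (i : ℝ)) := by
        rw [Finset.prod_range_reflect (fun j => y - (j : ℝ)) n]

lemma choose_key (k m : ℕ) :
    ((k:ℝ) + m + 1) * ((k + 2*m + 2).choose (m + 1) : ℝ)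
      + 2 * k * ((k + 2*m).choose m : ℝ)
    = (4 * ((k:ℝ) + m) + 2) * ((k + 2*m).choose m : ℝ)
      + k * ((k + 2*m + 1).choose (m + 1) : ℝ) := by
  rw [Nat.cast_choose ℝ (show m + 1 ≤ k + 2*m + 2 by omega),
      Nat.cast_choose ℝ (show m ≤ k + 2*m by omega),
      Nat.cast_choose ℝ (show m + 1 ≤ k + 2*m + 1 by omega)]
  rw [show k + 2*m + 2 - (m+1) = k+m+1 by omega,
      show k + 2*m - m = k+m by omega,
      show k + 2*m + 1 - (m+1) = k+m by omega]
  rw [show k + 2*m + 2 = (k+2*m+1)+1 by omega, Nat.factorial_succ (k+2*m+1),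
      show k + 2*m + 1 = (k+2*m)+1 by omega, Nat.factorial_succ (k+2*m),
      Nat.factorial_succ m,
      show k + m + 1 = (k+m)+1 by omega, Nat.factorial_succ (k+m)]
  have h1 : ((k+2*m).factorial : ℝ) ≠ 0 := Nat.cast_ne_zero.mpr (Nat.factorial_ne_zero _)
  have h2 : (m.factorial : ℝ) ≠ 0 := Nat.cast_ne_zero.mpr (Nat.factorial_ne_zero _)
  have h3 : ((k+m).factorial : ℝ) ≠ 0 := Nat.cast_ne_zero.mpr (Nat.factorial_ne_zero _)
  have h4 : ((m:ℝ) + 1) ≠ 0 := by positivity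
  have h5 : ((k:ℝ) + (m:ℝ) + 1) ≠ 0 := by positivity
  push_cast
  field_simp
  ring

lemma aux_sum (x : ℝ) (n : ℕ) :
    ∑ k ∈ Finset.range (n + 1),
        ((2 * n - k).choose (n - k) : ℝ) * (-2) ^ k * rchoose x k
    = (-4) ^ n * rchoose ((x - 1) / 2) n := by
  induction n with
  | zero => simp [rchoose]
  | succ n ih =>
    set g : ℕ → ℝ := fun j =>
      -(j:ℝ) * ((2*n + 1 - j).choose (n + 1 - j) : ℝ) * (-2) ^ j * rchoose x j with hg
    have key : ∀ k ∈ Finset.range (n+1),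
        ((n:ℝ)+1) * (((2*(n+1) - k).choose (n+1-k) : ℝ) * (-2)^k * rchoose x k)
        = (4*(n:ℝ)+2-2*x) * (((2*n - k).choose (n-k) : ℝ) * (-2)^k * rchoose x k)
          + (g (k+1) - g k) := by
      intro k hk
      have hkn : k ≤ n := Nat.lt_succ_iff.mp (Finset.mem_range.mp hk)
      obtain ⟨m, rfl⟩ := Nat.exists_eq_add_of_le hkn
      simp only [hg]
      rw [show 2*(k+m+1) - k = k+2*m+2 by omega, show (k+m+1) - k = m+1 by omega,
          show 2*(k+m) - k = k+2*m by omega, show (k+m) - k = m by omega,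
          show 2*(k+m)+1 - (k+1) = k+2*m by omega, show (k+m)+1 - (k+1) = m by omega,
          show 2*(k+m)+1 - k = k+2*m+1 by omega]
      rw [rchoose_succ]
      have hk1 : ((k:ℝ) + 1) ≠ 0 := by positivity
      push_cast
      field_simp
      linear_combination ((-2:ℝ)^k * rchoose x k) * choose_key k m
    have hsum := Finset.sum_congr rfl key
    rw [Finset.sum_add_distrib, Finset.sum_range_sub g (n+1), ← Finset.mul_sum,
        ← Finset.mul_sum] at hsum
    have hg0 : g 0 = 0 := by simp [hg]
    have hgn : g (n+1) = -((n:ℝ)+1) * (-2)^(n+1) * rchoose x (n+1) := by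
      simp only [hg]
      rw [show 2*n+1 - (n+1) = n by omega, show n+1 - (n+1) = 0 by omega,
          Nat.choose_zero_right]
      push_cast
      ring
    rw [hg0, hgn, ih] at hsum
    rw [Finset.sum_range_succ,
        show 2*(n+1) - (n+1) = n+1 by omega, show (n+1) - (n+1) = 0 by omega,
        Nat.choose_zero_right]
    have hn1 : ((n:ℝ) + 1) ≠ 0 := by positivity
    rw [rchoose_succ ((x-1)/2) n]
    simp only [show ∀ i:ℕ, 2*(n+1) - i = 2*n+2 - i from fun i => by omega] at hsum ⊢
    apply mul_left_cancel₀ hn1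
    have goal2 : ((n:ℝ)+1) * ((-4)^(n+1) * (rchoose ((x-1)/2) n * ((x-1)/2 - n) / ((n:ℝ)+1)))
        = (4*(n:ℝ)+2-2*x) * ((-4)^n * rchoose ((x-1)/2) n) := by
      field_simp
      ring
    rw [goal2]
    linear_combination hsum

/-- Hypergeometric identity:
`∑_{k=0}^{n} C(2n-k, n-k) (-2)^k binom(x,k) = 4^n binom(n - (x+1)/2, n)`. -/
theorem stmt14 (n : ℕ) (x : ℝ) :
    ∑ k ∈ Finset.range (n + 1),
        ((2 * n - k).choose (n - k) : ℝ) * (-2) ^ k * rchoose x k =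
      4 ^ n * rchoose ((n : ℝ) - (x + 1) / 2) n := by
  rw [aux_sum, show (n : ℝ) - (x + 1) / 2 = (n : ℝ) - 1 - (x - 1) / 2 from by ring,
      rchoose_reflect, show ((-4:ℝ)) = -1*4 from by norm_num, mul_pow]
  ring
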